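/- Fix 0 < λ ≤ 1, K ≥ 0, reals 0 < a < b and c < d < 0, and ω > 0. Let ξ : ℝ² → ℂ satisfy |ξ(p) − ξ(q)| ≤ K·|p − q|^λ for all p, q, and ξ(x,y) = 0 whenever (x,y) ∉ [a,b] × [c,d]. Then the function F(t) = ∬_{ℝ²} ξ(e^{−tω} x, y) (x − y)^{-2} dx dy is differentiable at t = 0 with derivative F′(0) = ω ∬_{ℝ²} ξ(x,y) · ((−x − y)/(x − y)) · (x − y)^{-2} dx dy. -/

import Mathlib

open MeasureTheory
open scoped NNReal ENNReal

private lemma bs_smul_prod_meas (c : ℝ≥0) (μ : Measure ℝ) [SigmaFinite μ]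
    (ν : Measure ℝ) [SigmaFinite ν] :
    ((c : ℝ≥0∞) • μ).prod ν = (c : ℝ≥0∞) • (μ.prod ν) := by
  haveI : SigmaFinite ((c : ℝ≥0∞) • μ) := SMul.sigmaFinite c
  exact Measure.prod_eq (fun u v hu hv => by
    simp [Measure.prod_prod, Measure.smul_apply, smul_eq_mul, mul_assoc]
    rw [ENNReal.smul_def, smul_eq_mul])

private lemma bs_map_scale_volume (s : ℝ) (hs : 0 < s) :
    Measure.map
      ((Homeomorph.prodCongr (Homeomorph.mulLeft₀ s hs.ne') (Homeomorph.refl ℝ)).toMeasurableEquiv)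
      (volume : Measure (ℝ × ℝ)) = ENNReal.ofReal s⁻¹ • volume := by
  have hcoe : ⇑(Homeomorph.prodCongr (Homeomorph.mulLeft₀ s hs.ne')
      (Homeomorph.refl ℝ)).toMeasurableEquiv = Prod.map (s * ·) id := rfl
  rw [hcoe, MeasureTheory.Measure.volume_eq_prod,
    ← Measure.map_prod_map _ _ (measurable_const_mul s) measurable_id,
    Measure.map_id, Real.map_volume_mul_left hs.ne',
    abs_of_pos (inv_pos.mpr hs)]
  rw [show ENNReal.ofReal s⁻¹ = ((Real.toNNReal s⁻¹ : ℝ≥0) : ℝ≥0∞) from rfl,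
    bs_smul_prod_meas, ← MeasureTheory.Measure.volume_eq_prod]

/-- The change of variables `x ↦ e^{tω} x` in the first coordinate. -/
private lemma bs_cov (ξ : ℝ × ℝ → ℂ) (t ω : ℝ) :
    (∫ p : ℝ × ℝ, ξ (Real.exp (-(t * ω)) * p.1, p.2) * ((((p.1 - p.2) ^ 2)⁻¹ : ℝ) : ℂ))
    = ∫ p : ℝ × ℝ,
        ξ p * ((Real.exp (t*ω) * ((Real.exp (t*ω) * p.1 - p.2) ^ 2)⁻¹ : ℝ) : ℂ) := by
  set s := Real.exp (t * ω) with hsdef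
  have hs : 0 < s := Real.exp_pos _
  set e := (Homeomorph.prodCongr (Homeomorph.mulLeft₀ s hs.ne')
      (Homeomorph.refl ℝ)).toMeasurableEquiv with hedef
  set g : ℝ × ℝ → ℂ := fun q => ξ (s⁻¹ * q.1, q.2) * ((((q.1 - q.2) ^ 2)⁻¹ : ℝ) : ℂ) with hgdef
  have key : (∫ q, g (e q)) = s⁻¹ • ∫ q, g q := by
    rw [← MeasureTheory.integral_map_equiv, bs_map_scale_volume s hs,
      integral_smul_measure, ENNReal.toReal_ofReal (inv_nonneg.mpr hs.le)]
  have hge : ∀ q : ℝ × ℝ, g (e q) = ξ q * ((((s * q.1 - q.2) ^ 2)⁻¹ : ℝ) : ℂ) := by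
    intro q
    have : e q = (s * q.1, q.2) := rfl
    rw [this, hgdef]
    simp [inv_mul_cancel_left₀ hs.ne']
  have hexp : Real.exp (-(t * ω)) = s⁻¹ := by rw [Real.exp_neg]
  calc (∫ p : ℝ × ℝ, ξ (Real.exp (-(t * ω)) * p.1, p.2) * ((((p.1 - p.2) ^ 2)⁻¹ : ℝ) : ℂ))
      = ∫ q, g q := by rw [hgdef]; simp_rw [hexp]
    _ = s • ∫ q, g (e q) := by
        rw [key, smul_smul, mul_inv_cancel₀ hs.ne', one_smul]
    _ = ∫ q, s • g (e q) := (integral_smul s _).symm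
    _ = ∫ p : ℝ × ℝ, ξ p * ((s * ((s * p.1 - p.2) ^ 2)⁻¹ : ℝ) : ℂ) := by
        congr 1; funext q; rw [hge q]
        push_cast [Complex.real_smul]
        ring

set_option maxHeartbeats 1000000 in
/-- Bonahon–Sözen: derivative at `t = 0` of the Liouville measure along a simple
earthquake path, evaluated on a Hölder test function `ξ` supported in a box of
geodesics crossing the earthquake geodesic. -/
theorem liouville_deriv_simple_earthquake
    (lam K : ℝ) (hlam0 : 0 < lam) (hlam1 : lam ≤ 1) (hK : 0 ≤ K)
    (a b c d : ℝ) (ha : 0 < a) (hab : a < b) (hcd : c < d) (hd : d < 0)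
    (ω : ℝ) (hω : 0 < ω)
    (ξ : ℝ × ℝ → ℂ)
    (hHolder : ∀ p q : ℝ × ℝ, ‖ξ p - ξ q‖ ≤ K * dist p q ^ lam)
    (hsupp : ∀ x y : ℝ, (x, y) ∉ Set.Icc a b ×ˢ Set.Icc c d → ξ (x, y) = 0) :
    HasDerivAt
      (fun t : ℝ => ∫ p : ℝ × ℝ,
        ξ (Real.exp (-(t * ω)) * p.1, p.2) * ((((p.1 - p.2) ^ 2)⁻¹ : ℝ) : ℂ))
      ((ω : ℂ) * ∫ p : ℝ × ℝ,
        ξ p * (((-p.1 - p.2) / (p.1 - p.2) : ℝ) : ℂ) * ((((p.1 - p.2) ^ 2)⁻¹ : ℝ) : ℂ))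
      0 := by
  classical
  set box : Set (ℝ × ℝ) := Set.Icc a b ×ˢ Set.Icc c d with hbox
  -- continuity of ξ
  have hcont : Continuous ξ := by
    rw [continuous_iff_continuousAt]
    intro p
    rw [ContinuousAt, tendsto_iff_norm_sub_tendsto_zero]
    have h1 : Filter.Tendsto (fun q : ℝ × ℝ => K * dist q p ^ lam) (nhds p) (nhds 0) := by
      have hc : ContinuousAt (fun q : ℝ × ℝ => K * dist q p ^ lam) p :=
        continuousAt_const.mul
          (((continuous_id.dist continuous_const).continuousAt).rpow_const (Or.inr hlam0.le))
      have h0 : K * dist p p ^ lam = 0 := by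
        rw [dist_self, Real.zero_rpow hlam0.ne', mul_zero]
      have := hc.tendsto
      rw [h0] at this
      exact this
    exact squeeze_zero (fun q => norm_nonneg _) (fun q => hHolder q p) h1
  -- uniform bound on ξ
  set R : ℝ := max (b - a + 1) (d - c + 1) with hRdef
  have hR0 : 0 < R := lt_of_lt_of_le (by linarith) (le_max_left _ _)
  set M : ℝ := K * R ^ lam with hMdef
  have hM0 : 0 ≤ M := by positivity
  have hq0 : ξ (a - 1, c - 1) = 0 := by
    apply hsupp
    rw [hbox]
    simp only [Set.mem_prod, Set.mem_Icc, not_and]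
    intro h
    exfalso; linarith [h.1]
  have hξzero : ∀ p : ℝ × ℝ, p ∉ box → ξ p = 0 := by
    intro p hp
    have := hsupp p.1 p.2 (by simpa [hbox] using hp)
    simpa using this
  have hMbd : ∀ p : ℝ × ℝ, ‖ξ p‖ ≤ M := by
    intro p
    by_cases hp : p ∈ box
    · obtain ⟨⟨hx1, hx2⟩, ⟨hy1, hy2⟩⟩ := hp
      have hdist : dist p (a - 1, c - 1) ≤ R := by
        rw [Prod.dist_eq]
        have e1 : ((a - 1, c - 1) : ℝ × ℝ).1 = a - 1 := rfl
        have e2 : ((a - 1, c - 1) : ℝ × ℝ).2 = c - 1 := rfl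
        apply max_le
        · rw [Real.dist_eq, e1, abs_of_nonneg (by linarith)]
          exact le_trans (by linarith) (le_max_left _ _)
        · rw [Real.dist_eq, e2, abs_of_nonneg (by linarith)]
          exact le_trans (by linarith) (le_max_right _ _)
      calc ‖ξ p‖ = ‖ξ p - ξ (a - 1, c - 1)‖ := by rw [hq0, sub_zero]
        _ ≤ K * dist p (a - 1, c - 1) ^ lam := hHolder _ _
        _ ≤ K * R ^ lam :=
            mul_le_mul_of_nonneg_left (Real.rpow_le_rpow dist_nonneg hdist hlam0.le) hK
    · simp [hξzero p hp, hM0]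
  -- basic constants
  set δ : ℝ := Real.exp (-ω) * a - d with hδdef
  have hδ0 : 0 < δ := by
    have := Real.exp_pos (-ω)
    nlinarith
  set Rt : ℝ := Real.exp ω * b - c with hRtdef
  have hb0 : 0 < b := lt_trans ha hab
  have hc0 : c < 0 := lt_trans hcd hd
  have hRt0 : 0 < Rt := by
    have h1 : (1 : ℝ) ≤ Real.exp ω := Real.one_le_exp hω.le
    nlinarith
  -- bounds on A = exp(tω) and D = A x - y for |t| ≤ 1 and p in the box
  have hAbd : ∀ t : ℝ, |t| ≤ 1 → Real.exp (-ω) ≤ Real.exp (t * ω) ∧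
      Real.exp (t * ω) ≤ Real.exp ω := by
    intro t ht
    rw [abs_le] at ht
    exact ⟨Real.exp_le_exp.mpr (by nlinarith [ht.1]),
      Real.exp_le_exp.mpr (by nlinarith [ht.2])⟩
  have hDbd : ∀ t : ℝ, |t| ≤ 1 → ∀ p : ℝ × ℝ, p ∈ box →
      δ ≤ Real.exp (t * ω) * p.1 - p.2 ∧ Real.exp (t * ω) * p.1 - p.2 ≤ Rt := by
    intro t ht p hp
    obtain ⟨⟨hx1, hx2⟩, ⟨hy1, hy2⟩⟩ := hp
    obtain ⟨hA1, hA2⟩ := hAbd t ht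
    have hexp0 : (0:ℝ) < Real.exp (-ω) := Real.exp_pos _
    constructor
    · have : Real.exp (-ω) * a ≤ Real.exp (t * ω) * p.1 := by nlinarith
      simp only [hδdef]; linarith
    · have : Real.exp (t * ω) * p.1 ≤ Real.exp ω * b := by nlinarith
      simp only [hRtdef]; linarith
  -- the substituted integrand and its t-derivative
  set F : ℝ → ℝ × ℝ → ℂ := fun t p =>
    ξ p * ((Real.exp (t*ω) * ((Real.exp (t*ω) * p.1 - p.2) ^ 2)⁻¹ : ℝ) : ℂ) with hFdef
  set G : ℝ → ℝ × ℝ → ℝ := fun t p =>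
    Real.exp (t*ω) * ω * ((Real.exp (t*ω) * p.1 - p.2) ^ 2)⁻¹
      + Real.exp (t*ω) * (-((2:ℕ) * (Real.exp (t*ω) * p.1 - p.2) ^ 1
          * (Real.exp (t*ω) * ω * p.1)) / ((Real.exp (t*ω) * p.1 - p.2) ^ 2) ^ 2) with hGdef
  set F' : ℝ → ℝ × ℝ → ℂ := fun t p => ξ p * ((G t p : ℝ) : ℂ) with hF'def
  -- measurability
  have hmF : ∀ t : ℝ, AEStronglyMeasurable (F t) volume := by
    intro t
    apply Measurable.aestronglyMeasurable
    apply (hcont.measurable).mul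
    apply Complex.measurable_ofReal.comp
    exact measurable_const.mul
      ((((measurable_fst.const_mul _).sub measurable_snd).pow_const 2).inv)
  have hmF' : AEStronglyMeasurable (F' 0) volume := by
    apply Measurable.aestronglyMeasurable
    apply (hcont.measurable).mul
    apply Complex.measurable_ofReal.comp
    have hbase : Measurable fun p : ℝ × ℝ => Real.exp (0*ω) * p.1 - p.2 :=
      (measurable_fst.const_mul _).sub measurable_snd
    apply Measurable.add
    · exact measurable_const.mul ((hbase.pow_const 2).inv)
    · apply Measurable.const_mul
      apply Measurable.div
      · exact ((measurable_const.mul (hbase.pow_const 1)).mul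
          (measurable_fst.const_mul _)).neg
      · exact (hbase.pow_const 2).pow_const 2
  -- the box has finite volume
  have hboxmeas : MeasurableSet box := measurableSet_Icc.prod measurableSet_Icc
  have hboxfin : volume box < ⊤ := by
    rw [hbox, MeasureTheory.Measure.volume_eq_prod, Measure.prod_prod]
    exact ENNReal.mul_lt_top (by simp) (by simp)
  -- integrability of F 0
  have hintF0 : Integrable (F 0) volume := by
    set C0 : ℝ := M * (Real.exp ω * (δ ^ 2)⁻¹) with hC0
    have hC00 : 0 ≤ C0 := by positivity
    apply Integrable.mono' (g := box.indicator fun _ => C0)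
    · rw [integrable_indicator_iff hboxmeas]
      exact integrableOn_const hboxfin.ne
    · exact hmF 0
    · apply Filter.Eventually.of_forall
      intro p
      by_cases hp : p ∈ box
      · rw [Set.indicator_of_mem hp]
        obtain ⟨hD1, hD2⟩ := hDbd 0 (by simp) p hp
        obtain ⟨hA1, hA2⟩ := hAbd 0 (by simp)
        have hDpos : 0 < Real.exp (0 * ω) * p.1 - p.2 := lt_of_lt_of_le hδ0 hD1
        have habs : |Real.exp (0*ω) * ((Real.exp (0*ω) * p.1 - p.2) ^ 2)⁻¹|
            ≤ Real.exp ω * (δ ^ 2)⁻¹ := by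
          rw [abs_of_nonneg (by positivity)]
          exact mul_le_mul hA2
            (inv_anti₀ (by positivity) (pow_le_pow_left₀ hδ0.le hD1 2))
            (by positivity) (Real.exp_pos _).le
        calc ‖F 0 p‖ = ‖ξ p‖ * |Real.exp (0*ω) * ((Real.exp (0*ω) * p.1 - p.2) ^ 2)⁻¹| := by
              simp only [hFdef]
              rw [norm_mul, Complex.norm_real, Real.norm_eq_abs]
          _ ≤ M * (Real.exp ω * (δ ^ 2)⁻¹) := mul_le_mul (hMbd p) habs (abs_nonneg _) hM0
      · rw [Set.indicator_of_notMem hp]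
        simp only [hFdef]
        simp [hξzero p hp]
  -- bound on the derivative
  set C : ℝ := M * (Real.exp ω * ω * (δ ^ 2)⁻¹
      + Real.exp ω * ((2 * Rt * (Real.exp ω * ω * b)) / (δ ^ 2) ^ 2)) with hCdef
  have hbound : ∀ p : ℝ × ℝ, ∀ t ∈ Metric.ball (0:ℝ) 1,
      ‖F' t p‖ ≤ box.indicator (fun _ => C) p := by
    intro p t ht
    have htabs : |t| ≤ 1 := by
      rw [Metric.mem_ball, Real.dist_eq, sub_zero] at ht
      exact ht.le
    by_cases hp : p ∈ box
    · rw [Set.indicator_of_mem hp]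
      obtain ⟨hD1, hD2⟩ := hDbd t htabs p hp
      obtain ⟨hA1, hA2⟩ := hAbd t htabs
      obtain ⟨⟨hx1, hx2⟩, ⟨hy1, hy2⟩⟩ := hp
      have hDpos : 0 < Real.exp (t * ω) * p.1 - p.2 := lt_of_lt_of_le hδ0 hD1
      have hApos : 0 < Real.exp (t * ω) := Real.exp_pos _
      have hx0 : 0 < p.1 := lt_of_lt_of_le ha hx1
      have hGbd : |G t p| ≤ Real.exp ω * ω * (δ ^ 2)⁻¹
          + Real.exp ω * ((2 * Rt * (Real.exp ω * ω * b)) / (δ ^ 2) ^ 2) := by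
        simp only [hGdef]
        refine le_trans (abs_add_le _ _) (add_le_add ?_ ?_)
        · rw [abs_of_nonneg (by positivity)]
          exact mul_le_mul (mul_le_mul_of_nonneg_right hA2 hω.le)
            (inv_anti₀ (by positivity) (pow_le_pow_left₀ hδ0.le hD1 2))
            (by positivity) (by positivity)
        · rw [abs_mul, abs_of_nonneg hApos.le, abs_div, abs_neg]
          have hnn : (0:ℝ) ≤ ((2:ℕ):ℝ) * (Real.exp (t*ω) * p.1 - p.2) ^ 1
              * (Real.exp (t*ω) * ω * p.1) :=
            mul_nonneg (mul_nonneg (by norm_num) (pow_nonneg hDpos.le 1)) (by positivity)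
          have hnum : |((2:ℕ):ℝ) * (Real.exp (t * ω) * p.1 - p.2) ^ 1
              * (Real.exp (t * ω) * ω * p.1)| ≤ 2 * Rt * (Real.exp ω * ω * b) := by
            rw [abs_of_nonneg hnn]
            have t1 : ((2:ℕ):ℝ) * (Real.exp (t * ω) * p.1 - p.2) ^ 1 ≤ 2 * Rt := by
              rw [pow_one]; push_cast; linarith
            have t2 : Real.exp (t*ω) * ω * p.1 ≤ Real.exp ω * ω * b :=
              mul_le_mul (mul_le_mul_of_nonneg_right hA2 hω.le) hx2 hx0.le (by positivity)
            exact mul_le_mul t1 t2 (by positivity) (by linarith)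
          have hden : |((Real.exp (t * ω) * p.1 - p.2) ^ 2) ^ 2|
              = ((Real.exp (t * ω) * p.1 - p.2) ^ 2) ^ 2 := abs_of_nonneg (by positivity)
          rw [hden]
          have hden2 : (δ ^ 2) ^ 2 ≤ ((Real.exp (t * ω) * p.1 - p.2) ^ 2) ^ 2 :=
            pow_le_pow_left₀ (by positivity) (pow_le_pow_left₀ hδ0.le hD1 2) 2
          exact mul_le_mul_of_nonneg_left
            (div_le_div₀ (by positivity) hnum (by positivity) hden2) hApos.le |>.trans
            (mul_le_mul_of_nonneg_right hA2 (by positivity))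
      calc ‖F' t p‖ = ‖ξ p‖ * |G t p| := by
            simp only [hF'def]
            rw [norm_mul, Complex.norm_real, Real.norm_eq_abs]
        _ ≤ M * (Real.exp ω * ω * (δ ^ 2)⁻¹
            + Real.exp ω * ((2 * Rt * (Real.exp ω * ω * b)) / (δ ^ 2) ^ 2)) :=
          mul_le_mul (hMbd p) hGbd (abs_nonneg _) hM0
        _ = C := by rw [hCdef]
    · rw [Set.indicator_of_notMem hp]
      simp only [hF'def]
      simp [hξzero p hp]
  have hboundint : Integrable (box.indicator fun _ : ℝ × ℝ => C) volume := by
    rw [integrable_indicator_iff hboxmeas]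
    exact integrableOn_const hboxfin.ne
  -- differentiability
  have hdiff : ∀ p : ℝ × ℝ, ∀ t ∈ Metric.ball (0:ℝ) 1,
      HasDerivAt (fun u => F u p) (F' t p) t := by
    intro p t ht
    have htabs : |t| ≤ 1 := by
      rw [Metric.mem_ball, Real.dist_eq, sub_zero] at ht
      exact ht.le
    by_cases hp : p ∈ box
    · have hne : Real.exp (t*ω) * p.1 - p.2 ≠ 0 :=
        (lt_of_lt_of_le hδ0 (hDbd t htabs p hp).1).ne'
      have hA : HasDerivAt (fun u : ℝ => Real.exp (u*ω)) (Real.exp (t*ω) * ω) t :=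
        (hasDerivAt_mul_const ω).exp
      have hD : HasDerivAt (fun u : ℝ => Real.exp (u*ω) * p.1 - p.2)
          (Real.exp (t*ω) * ω * p.1) t := (hA.mul_const p.1).sub_const p.2
      have hD2 := hD.pow 2
      have hinv := hD2.inv (pow_ne_zero 2 hne)
      have hreal := hA.mul hinv
      have hcplx := hreal.ofReal_comp
      exact hcplx.const_mul (ξ p)
    · have hzero : (fun u => F u p) = fun _ => (0 : ℂ) := by
        funext u
        simp only [hFdef]
        simp [hξzero p hp]
      rw [hzero]
      simp only [hF'def]
      simp only [hξzero p hp, zero_mul]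
      exact hasDerivAt_const t 0
  -- apply dominated differentiation
  have hmain := hasDerivAt_integral_of_dominated_loc_of_deriv_le
    (F := F) (F' := F') (x₀ := (0:ℝ)) (bound := box.indicator fun _ => C)
    (μ := (volume : Measure (ℝ × ℝ))) (Metric.ball_mem_nhds 0 one_pos)
    (Filter.Eventually.of_forall hmF) hintF0 hmF'
    (Filter.Eventually.of_forall hbound) hboundint
    (Filter.Eventually.of_forall hdiff)
  obtain ⟨-, hderiv⟩ := hmain
  -- identify the function
  have hfun : (fun t : ℝ => ∫ p : ℝ × ℝ,
      ξ (Real.exp (-(t * ω)) * p.1, p.2) * ((((p.1 - p.2) ^ 2)⁻¹ : ℝ) : ℂ))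
      = fun t : ℝ => ∫ p, F t p := by
    funext t
    rw [bs_cov ξ t ω, hFdef]
  -- identify the derivative
  have hder : (∫ p, F' 0 p)
      = (ω : ℂ) * ∫ p : ℝ × ℝ,
          ξ p * (((-p.1 - p.2) / (p.1 - p.2) : ℝ) : ℂ) * ((((p.1 - p.2) ^ 2)⁻¹ : ℝ) : ℂ) := by
    have hptwise : ∀ p : ℝ × ℝ, F' 0 p = (ω : ℂ) *
        (ξ p * (((-p.1 - p.2) / (p.1 - p.2) : ℝ) : ℂ) * ((((p.1 - p.2) ^ 2)⁻¹ : ℝ) : ℂ)) := by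
      intro p
      by_cases hp : p ∈ box
      · have hne : p.1 - p.2 ≠ 0 := by
          obtain ⟨⟨hx1, hx2⟩, ⟨hy1, hy2⟩⟩ := hp
          have : 0 < p.1 - p.2 := by linarith [lt_of_lt_of_le ha hx1, lt_of_le_of_lt hy2 hd]
          exact this.ne'
        have hGval : G 0 p = ω * ((-p.1 - p.2) / (p.1 - p.2) * ((p.1 - p.2) ^ 2)⁻¹) := by
          simp only [hGdef, zero_mul, Real.exp_zero, one_mul, pow_one]
          push_cast
          field_simp
          ring
        simp only [hF'def, hGval]
        push_cast
        ring
      · simp only [hF'def]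
        simp [hξzero p hp]
    rw [show (fun p => F' 0 p) = fun p : ℝ × ℝ => (ω : ℂ) *
        (ξ p * (((-p.1 - p.2) / (p.1 - p.2) : ℝ) : ℂ) * ((((p.1 - p.2) ^ 2)⁻¹ : ℝ) : ℂ)) from
      funext hptwise]
    exact integral_const_mul _ _
  rw [hfun, ← hder]
  exact hderiv
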